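/- (Cambanis–Simons–Stout upper bound) For any two real random variables X and Y with finite second moments and cdfs F_X and F_Y, and any coupling (X̃, Ỹ) with these marginals, E[X̃ Ỹ] ≤ E[F_X^{-1}(U) F_Y^{-1}(U)] where U ~ Uniform[0,1]. Moreover the bound is attained by the coupling (F_X^{-1}(U), F_Y^{-1}(U)). -/

import Mathlib

open MeasureTheory Set Filter

noncomputable def qf (μ : Measure ℝ) (t : ℝ) : ℝ :=
  sInf {x | t ≤ (μ (Set.Iic x)).toReal}

section QF
variable (μ : Measure ℝ) [IsProbabilityMeasure μ]

lemma qf_le_iff {u : ℝ} (hu : u ∈ Set.Ioo (0:ℝ) 1) (x : ℝ) :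
    qf μ u ≤ x ↔ u ≤ (μ (Set.Iic x)).toReal := by
  set F : ℝ → ℝ := fun x => (μ (Set.Iic x)).toReal with hF
  have hFc : ∀ y, F y = ProbabilityTheory.cdf μ y := fun y =>
    (ProbabilityTheory.cdf_eq_real μ y).symm
  have hFc' : F = fun y => ProbabilityTheory.cdf μ y := funext hFc
  have hmono : Monotone F := by
    rw [hFc']; exact fun a b hab => (ProbabilityTheory.cdf μ).mono hab
  set S : Set ℝ := {x | u ≤ F x} with hS
  have hup : ∀ a ∈ S, ∀ b, a ≤ b → b ∈ S := fun a ha b hab => le_trans ha (hmono hab)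
  have hne : S.Nonempty := by
    have h1 : Tendsto F atTop (nhds 1) := by
      rw [hFc']; exact ProbabilityTheory.tendsto_cdf_atTop μ
    have h2 : ∀ᶠ y in atTop, u < F y := h1.eventually (eventually_gt_nhds hu.2)
    obtain ⟨y, hy⟩ := h2.exists
    exact ⟨y, le_of_lt hy⟩
  have hbdd : BddBelow S := by
    have h0 : Tendsto F atBot (nhds 0) := by
      rw [hFc']; exact ProbabilityTheory.tendsto_cdf_atBot μ
    have h2 : ∀ᶠ y in atBot, F y < u := h0.eventually (eventually_lt_nhds hu.1)
    obtain ⟨y, hy⟩ := h2.exists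
    refine ⟨y, fun z hz => ?_⟩
    by_contra hzy
    exact absurd (le_trans hz (hmono (le_of_lt (not_le.mp hzy)))) (not_le.mpr hy)
  have hIoi : Set.Ioi (sInf S) ⊆ S := by
    intro b hb
    obtain ⟨a, haS, hab⟩ := (csInf_lt_iff hbdd hne).mp hb
    exact hup a haS b hab.le
  have hmem : sInf S ∈ S := by
    have hrc : ContinuousWithinAt F (Set.Ici (sInf S)) (sInf S) := by
      rw [hFc']; exact (ProbabilityTheory.cdf μ).right_continuous (sInf S)
    have : Tendsto F (nhdsWithin (sInf S) (Set.Ioi (sInf S))) (nhds (F (sInf S))) :=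
      hrc.tendsto.mono_left (nhdsWithin_mono _ Ioi_subset_Ici_self)
    have hle : u ≤ F (sInf S) := by
      refine ge_of_tendsto this ?_
      filter_upwards [self_mem_nhdsWithin] with b hb using hIoi hb
    exact hle
  constructor
  · intro h
    exact hup _ hmem _ h
  · intro h
    exact csInf_le hbdd h

lemma qf_monoOn : MonotoneOn (qf μ) (Set.Ioo (0:ℝ) 1) := by
  intro u hu v hv huv
  rw [qf_le_iff μ hu]
  exact le_trans huv ((qf_le_iff μ hv (qf μ v)).mp le_rfl)

lemma qf_aemeasurable : AEMeasurable (qf μ) (volume.restrict (Set.Ioc (0:ℝ) 1)) := by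
  rw [← Measure.restrict_congr_set Ioo_ae_eq_Ioc]
  exact aemeasurable_restrict_of_monotoneOn measurableSet_Ioo (qf_monoOn μ)

lemma map_qf : Measure.map (qf μ) (volume.restrict (Set.Ioc (0:ℝ) 1)) = μ := by
  haveI : IsProbabilityMeasure (volume.restrict (Set.Ioc (0:ℝ) 1)) := by
    constructor; simp [Real.volume_Ioc]
  haveI : IsProbabilityMeasure (Measure.map (qf μ) (volume.restrict (Set.Ioc (0:ℝ) 1))) :=
    Measure.isProbabilityMeasure_map (qf_aemeasurable μ)
  refine Measure.ext_of_Iic _ _ (fun x => ?_)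
  rw [Measure.map_apply_of_aemeasurable (qf_aemeasurable μ) measurableSet_Iic,
    Measure.restrict_apply' measurableSet_Ioc]
  set c : ℝ := (μ (Set.Iic x)).toReal with hc
  have hc0 : 0 ≤ c := ENNReal.toReal_nonneg
  have hc1 : c ≤ 1 := by
    rw [hc]
    exact ENNReal.toReal_le_of_le_ofReal one_pos.le (by simpa using prob_le_one)
  have key : (qf μ ⁻¹' Set.Iic x) ∩ Set.Ioo 0 1 = Set.Iic c ∩ Set.Ioo 0 1 := by
    ext u
    simp only [Set.mem_inter_iff, Set.mem_preimage, Set.mem_Iic]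
    constructor
    · rintro ⟨h1, h2⟩; exact ⟨(qf_le_iff μ h2 x).mp h1, h2⟩
    · rintro ⟨h1, h2⟩; exact ⟨(qf_le_iff μ h2 x).mpr h1, h2⟩
  have hIocIoo : ∀ E : Set ℝ, volume (E ∩ Set.Ioc (0:ℝ) 1) = volume (E ∩ Set.Ioo (0:ℝ) 1) := by
    intro E
    apply le_antisymm
    · have : E ∩ Set.Ioc (0:ℝ) 1 ⊆ (E ∩ Set.Ioo 0 1) ∪ {1} := by
        rintro y ⟨hyE, hy1, hy2⟩
        rcases lt_or_eq_of_le hy2 with h | h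
        · exact Or.inl ⟨hyE, hy1, h⟩
        · exact Or.inr (by simp [h])
      calc volume (E ∩ Set.Ioc (0:ℝ) 1) ≤ volume ((E ∩ Set.Ioo 0 1) ∪ {1}) := measure_mono this
        _ ≤ volume (E ∩ Set.Ioo 0 1) + volume ({1} : Set ℝ) := measure_union_le _ _
        _ = volume (E ∩ Set.Ioo 0 1) := by simp
    · exact measure_mono (Set.inter_subset_inter_right E Set.Ioo_subset_Ioc_self)
  rw [hIocIoo, key, ← hIocIoo]
  have : Set.Iic c ∩ Set.Ioc (0:ℝ) 1 = Set.Ioc 0 c := by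
    ext u
    simp only [Set.mem_inter_iff, Set.mem_Iic, Set.mem_Ioc]
    exact ⟨fun ⟨h1, h2, h3⟩ => ⟨h2, h1⟩, fun ⟨h1, h2⟩ => ⟨h2, h1, le_trans h2 hc1⟩⟩
  rw [this, Real.volume_Ioc, sub_zero, hc, ENNReal.ofReal_toReal (measure_ne_top μ _)]

end QF

def IsUp (A : Set ℝ) : Prop :=
  A ⊆ Set.Ioo 0 1 ∧ ∀ u ∈ A, ∀ v ∈ Set.Ioo (0:ℝ) 1, u ≤ v → v ∈ A

def IsDown (A : Set ℝ) : Prop :=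
  A ⊆ Set.Ioo 0 1 ∧ ∀ u ∈ A, ∀ v ∈ Set.Ioo (0:ℝ) 1, v ≤ u → v ∈ A

lemma IsUp.sandwich {A : Set ℝ} (hA : IsUp A) (hne : A.Nonempty) :
    Set.Ioo (sInf A) 1 ⊆ A ∧ A ⊆ Set.Ico (sInf A) 1 ∧
      sInf A ∈ Set.Icc (0:ℝ) 1 := by
  have hbdd : BddBelow A := ⟨0, fun u hu => (hA.1 hu).1.le⟩
  obtain ⟨w, hw⟩ := id hne
  have h1 : Set.Ioo (sInf A) 1 ⊆ A := by
    rintro v ⟨hv1, hv2⟩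
    obtain ⟨u, huA, huv⟩ := (csInf_lt_iff hbdd hne).mp hv1
    exact hA.2 u huA v ⟨lt_trans (hA.1 huA).1 huv, hv2⟩ huv.le
  refine ⟨h1, fun u hu => ⟨csInf_le hbdd hu, (hA.1 hu).2⟩, ?_, ?_⟩
  · exact le_csInf hne (fun u hu => (hA.1 hu).1.le)
  · exact le_trans (csInf_le hbdd hw) (hA.1 hw).2.le

lemma IsUp.vol {A : Set ℝ} (hA : IsUp A) (hne : A.Nonempty) :
    volume A = ENNReal.ofReal (1 - sInf A) := by
  obtain ⟨h1, h2, _⟩ := hA.sandwich hne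
  refine le_antisymm ?_ ?_
  · calc volume A ≤ volume (Set.Ico (sInf A) 1) := measure_mono h2
      _ = ENNReal.ofReal (1 - sInf A) := Real.volume_Ico
  · calc ENNReal.ofReal (1 - sInf A) = volume (Set.Ioo (sInf A) 1) := Real.volume_Ioo.symm
      _ ≤ volume A := measure_mono h1

lemma IsDown.sandwich {A : Set ℝ} (hA : IsDown A) (hne : A.Nonempty) :
    Set.Ioo 0 (sSup A) ⊆ A ∧ A ⊆ Set.Ioc 0 (sSup A) ∧
      sSup A ∈ Set.Icc (0:ℝ) 1 := by
  have hbdd : BddAbove A := ⟨1, fun u hu => (hA.1 hu).2.le⟩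
  obtain ⟨w, hw⟩ := id hne
  have hsup1 : sSup A ≤ 1 := csSup_le hne (fun u hu => (hA.1 hu).2.le)
  have h1 : Set.Ioo 0 (sSup A) ⊆ A := by
    rintro v ⟨hv1, hv2⟩
    obtain ⟨u, huA, huv⟩ := exists_lt_of_lt_csSup hne hv2
    exact hA.2 u huA v ⟨hv1, lt_of_lt_of_le (lt_of_lt_of_le huv (le_csSup hbdd huA)) hsup1⟩ huv.le
  refine ⟨h1, fun u hu => ⟨(hA.1 hu).1, le_csSup hbdd hu⟩, ?_, hsup1⟩
  · exact le_trans (hA.1 hw).1.le (le_csSup hbdd hw)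

lemma IsDown.vol {A : Set ℝ} (hA : IsDown A) (hne : A.Nonempty) :
    volume A = ENNReal.ofReal (sSup A) := by
  obtain ⟨h1, h2, _⟩ := hA.sandwich hne
  refine le_antisymm ?_ ?_
  · calc volume A ≤ volume (Set.Ioc 0 (sSup A)) := measure_mono h2
      _ = ENNReal.ofReal (sSup A) := by rw [Real.volume_Ioc, sub_zero]
  · have h3 : ENNReal.ofReal (sSup A) = volume (Set.Ioo 0 (sSup A)) := by
      rw [Real.volume_Ioo, sub_zero]
    rw [h3]; exact measure_mono h1

lemma up_up_inter {A B : Set ℝ} (hA : IsUp A) (hB : IsUp B) :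
    volume (A ∩ B) = min (volume A) (volume B) := by
  rcases A.eq_empty_or_nonempty with rfl | hAne
  · simp
  rcases B.eq_empty_or_nonempty with rfl | hBne
  · simp
  obtain ⟨hA1, hA2, hA0, hA3⟩ := hA.sandwich hAne
  obtain ⟨hB1, hB2, hB0, hB3⟩ := hB.sandwich hBne
  have h1 : Set.Ioo (max (sInf A) (sInf B)) 1 ⊆ A ∩ B := by
    rintro v ⟨hv1, hv2⟩
    exact ⟨hA1 ⟨lt_of_le_of_lt (le_max_left _ _) hv1, hv2⟩,
      hB1 ⟨lt_of_le_of_lt (le_max_right _ _) hv1, hv2⟩⟩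
  have h2 : A ∩ B ⊆ Set.Ico (max (sInf A) (sInf B)) 1 := by
    rintro v ⟨hvA, hvB⟩
    exact ⟨max_le (hA2 hvA).1 (hB2 hvB).1, (hA2 hvA).2⟩
  have hv : volume (A ∩ B) = ENNReal.ofReal (1 - max (sInf A) (sInf B)) := by
    refine le_antisymm ?_ ?_
    · calc volume (A ∩ B) ≤ volume (Set.Ico (max (sInf A) (sInf B)) 1) := measure_mono h2
        _ = _ := Real.volume_Ico
    · calc ENNReal.ofReal (1 - max (sInf A) (sInf B))
          = volume (Set.Ioo (max (sInf A) (sInf B)) 1) := Real.volume_Ioo.symm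
        _ ≤ _ := measure_mono h1
  rw [hv, hA.vol hAne, hB.vol hBne]
  rcases le_total (sInf A) (sInf B) with h | h
  · rw [max_eq_right h, min_eq_right (ENNReal.ofReal_le_ofReal (by linarith))]
  · rw [max_eq_left h, min_eq_left (ENNReal.ofReal_le_ofReal (by linarith))]

lemma down_down_inter {A B : Set ℝ} (hA : IsDown A) (hB : IsDown B) :
    volume (A ∩ B) = min (volume A) (volume B) := by
  rcases A.eq_empty_or_nonempty with rfl | hAne
  · simp
  rcases B.eq_empty_or_nonempty with rfl | hBne
  · simp
  obtain ⟨hA1, hA2, hA0, hA3⟩ := hA.sandwich hAne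
  obtain ⟨hB1, hB2, hB0, hB3⟩ := hB.sandwich hBne
  have h1 : Set.Ioo 0 (min (sSup A) (sSup B)) ⊆ A ∩ B := by
    rintro v ⟨hv1, hv2⟩
    exact ⟨hA1 ⟨hv1, lt_of_lt_of_le hv2 (min_le_left _ _)⟩,
      hB1 ⟨hv1, lt_of_lt_of_le hv2 (min_le_right _ _)⟩⟩
  have h2 : A ∩ B ⊆ Set.Ioc 0 (min (sSup A) (sSup B)) := by
    rintro v ⟨hvA, hvB⟩
    exact ⟨(hA2 hvA).1, le_min (hA2 hvA).2 (hB2 hvB).2⟩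
  have hv : volume (A ∩ B) = ENNReal.ofReal (min (sSup A) (sSup B)) := by
    refine le_antisymm ?_ ?_
    · calc volume (A ∩ B) ≤ volume (Set.Ioc 0 (min (sSup A) (sSup B))) := measure_mono h2
        _ = _ := by rw [Real.volume_Ioc, sub_zero]
    · calc ENNReal.ofReal (min (sSup A) (sSup B))
          = volume (Set.Ioo 0 (min (sSup A) (sSup B))) := by rw [Real.volume_Ioo, sub_zero]
        _ ≤ _ := measure_mono h1
  rw [hv, hA.vol hAne, hB.vol hBne]
  rcases le_total (sSup A) (sSup B) with h | h
  · rw [min_eq_left h, min_eq_left (ENNReal.ofReal_le_ofReal h)]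
  · rw [min_eq_right h, min_eq_right (ENNReal.ofReal_le_ofReal h)]

lemma up_diff_up {A B : Set ℝ} (hA : IsUp A) (hB : IsUp B) :
    volume (A \ B) = volume A - volume B := by
  rcases A.eq_empty_or_nonempty with rfl | hAne
  · simp [zero_tsub]
  rcases B.eq_empty_or_nonempty with rfl | hBne
  · simp
  obtain ⟨hA1, hA2, hA0, hA3⟩ := hA.sandwich hAne
  obtain ⟨hB1, hB2, hB0, hB3⟩ := hB.sandwich hBne
  obtain ⟨w, hw⟩ := id hBne
  have hb1 : sInf B < 1 := lt_of_le_of_lt (hB2 hw).1 (hB.1 hw).2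
  have h2 : A \ B ⊆ Set.Icc (sInf A) (sInf B) := by
    rintro v ⟨hvA, hvB⟩
    refine ⟨(hA2 hvA).1, ?_⟩
    by_contra h
    exact hvB (hB1 ⟨not_le.mp h, (hA2 hvA).2⟩)
  have h1 : Set.Ioo (sInf A) (sInf B) ⊆ A \ B := by
    rintro v ⟨hv1, hv2⟩
    refine ⟨hA1 ⟨hv1, lt_trans hv2 hb1⟩, fun hvB => ?_⟩
    exact absurd (hB2 hvB).1 (not_le.mpr hv2)
  have hv : volume (A \ B) = ENNReal.ofReal (sInf B - sInf A) := by
    refine le_antisymm ?_ ?_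
    · calc volume (A \ B) ≤ volume (Set.Icc (sInf A) (sInf B)) := measure_mono h2
        _ = _ := Real.volume_Icc
    · calc ENNReal.ofReal (sInf B - sInf A) = volume (Set.Ioo (sInf A) (sInf B)) :=
          Real.volume_Ioo.symm
        _ ≤ _ := measure_mono h1
  rw [hv, hA.vol hAne, hB.vol hBne, ← ENNReal.ofReal_sub _ (by linarith)]
  ring_nf

lemma indicator_slice {α β : Type*} (E : Set (α × β)) (p : α) (q : β) :
    E.indicator (1 : α × β → ENNReal) (p, q) =
      ((fun q' => (p, q')) ⁻¹' E).indicator (1 : β → ENNReal) q := by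
  rfl

lemma indicator_slice' {α β : Type*} (E : Set (α × β)) (p : α) (q : β) :
    E.indicator (1 : α × β → ENNReal) (p, q) =
      ((fun p' => (p', q)) ⁻¹' E).indicator (1 : α → ENNReal) p := by
  rfl

lemma layercake2 (π : Measure (ℝ × ℝ)) [SFinite π] (f g : ℝ × ℝ → ℝ)
    (hf : Continuous f) (hg : Continuous g) :
    ∫⁻ p, ENNReal.ofReal (f p) * ENNReal.ofReal (g p) ∂π =
      ∫⁻ q, π {p | 0 < q.1 ∧ q.1 ≤ f p ∧ 0 < q.2 ∧ q.2 ≤ g p} ∂(volume.prod volume) := by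
  set E : Set ((ℝ × ℝ) × (ℝ × ℝ)) :=
    {z | 0 < z.2.1 ∧ z.2.1 ≤ f z.1 ∧ 0 < z.2.2 ∧ z.2.2 ≤ g z.1} with hE
  have hf' : Measurable f := hf.measurable
  have hg' : Measurable g := hg.measurable
  have hEm : MeasurableSet E := by
    apply MeasurableSet.inter
    · exact measurableSet_lt measurable_const (measurable_snd.fst)
    apply MeasurableSet.inter
    · exact measurableSet_le (measurable_snd.fst) (hf'.comp measurable_fst)
    apply MeasurableSet.inter
    · exact measurableSet_lt measurable_const (measurable_snd.snd)
    · exact measurableSet_le (measurable_snd.snd) (hg'.comp measurable_fst)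
  have step1 : ∀ p : ℝ × ℝ, ENNReal.ofReal (f p) * ENNReal.ofReal (g p) =
      ∫⁻ q, E.indicator 1 (p, q) ∂(volume.prod volume) := by
    intro p
    have hslice : (fun q' => (p, q')) ⁻¹' E = Set.Ioc 0 (f p) ×ˢ Set.Ioc 0 (g p) := by
      ext q
      simp only [Set.mem_preimage, hE, Set.mem_setOf_eq, Set.mem_prod, Set.mem_Ioc]
      tauto
    calc ENNReal.ofReal (f p) * ENNReal.ofReal (g p)
        = volume (Set.Ioc 0 (f p)) * volume (Set.Ioc 0 (g p)) := by
          rw [Real.volume_Ioc, Real.volume_Ioc, sub_zero, sub_zero]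
      _ = (volume.prod volume) (Set.Ioc 0 (f p) ×ˢ Set.Ioc 0 (g p)) :=
          (Measure.prod_prod _ _).symm
      _ = ∫⁻ q, ((fun q' => (p, q')) ⁻¹' E).indicator 1 q ∂(volume.prod volume) := by
          rw [lintegral_indicator_one (hslice ▸ (measurableSet_Ioc.prod measurableSet_Ioc)), hslice]
      _ = ∫⁻ q, E.indicator 1 (p, q) ∂(volume.prod volume) := by
          simp_rw [indicator_slice]
  have hunc : Measurable (Function.uncurry fun p q => E.indicator (1 : (ℝ×ℝ)×(ℝ×ℝ) → ENNReal) (p, q)) := by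
    have : (Function.uncurry fun p q => E.indicator (1 : (ℝ×ℝ)×(ℝ×ℝ) → ENNReal) (p, q)) =
        E.indicator 1 := rfl
    rw [this]
    exact measurable_one.indicator hEm
  calc ∫⁻ p, ENNReal.ofReal (f p) * ENNReal.ofReal (g p) ∂π
      = ∫⁻ p, ∫⁻ q, E.indicator 1 (p, q) ∂(volume.prod volume) ∂π := by
        exact lintegral_congr step1
    _ = ∫⁻ q, ∫⁻ p, E.indicator 1 (p, q) ∂π ∂(volume.prod volume) :=
        lintegral_lintegral_swap hunc.aemeasurable
    _ = ∫⁻ q, π {p | 0 < q.1 ∧ q.1 ≤ f p ∧ 0 < q.2 ∧ q.2 ≤ g p} ∂(volume.prod volume) := by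
        refine lintegral_congr fun q => ?_
        have hslice : (fun p' => (p', q)) ⁻¹' E = {p | 0 < q.1 ∧ q.1 ≤ f p ∧ 0 < q.2 ∧ q.2 ≤ g p} := by
          ext p; simp only [Set.mem_preimage, hE, Set.mem_setOf_eq]
        simp_rw [indicator_slice']
        rw [lintegral_indicator_one (hslice ▸ hEm.preimage (measurable_id.prodMk measurable_const)), hslice]

lemma vol_inter_Ioc_Ioo (E : Set ℝ) :
    volume (E ∩ Set.Ioc (0:ℝ) 1) = volume (E ∩ Set.Ioo (0:ℝ) 1) := by
  apply le_antisymm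
  · have hsub : E ∩ Set.Ioc (0:ℝ) 1 ⊆ (E ∩ Set.Ioo 0 1) ∪ {1} := by
      rintro y ⟨hyE, hy1, hy2⟩
      rcases lt_or_eq_of_le hy2 with h | h
      · exact Or.inl ⟨hyE, hy1, h⟩
      · exact Or.inr (by simp [h])
    calc volume (E ∩ Set.Ioc (0:ℝ) 1) ≤ volume ((E ∩ Set.Ioo 0 1) ∪ {1}) := measure_mono hsub
      _ ≤ volume (E ∩ Set.Ioo 0 1) + volume ({1} : Set ℝ) := measure_union_le _ _
      _ = volume (E ∩ Set.Ioo 0 1) := by simp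
  · exact measure_mono (Set.inter_subset_inter_right E Set.Ioo_subset_Ioc_self)

section Main
variable (μ ν : Measure ℝ) [IsProbabilityMeasure μ] [IsProbabilityMeasure ν]

lemma vol_qf_preimage (S : Set ℝ) (hS : MeasurableSet S) :
    volume (qf μ ⁻¹' S ∩ Set.Ioo (0:ℝ) 1) = μ S := by
  rw [← vol_inter_Ioc_Ioo, ← Measure.restrict_apply' measurableSet_Ioc,
    ← Measure.map_apply_of_aemeasurable (qf_aemeasurable μ) hS, map_qf]

lemma isUp_U (x : ℝ) : IsUp {u | u ∈ Set.Ioo (0:ℝ) 1 ∧ x ≤ qf μ u} :=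
  ⟨fun u hu => hu.1, fun u hu v hv huv => ⟨hv, le_trans hu.2 (qf_monoOn μ hu.1 hv huv)⟩⟩

lemma isUp_V (x : ℝ) : IsUp {u | u ∈ Set.Ioo (0:ℝ) 1 ∧ x < qf μ u} :=
  ⟨fun u hu => hu.1, fun u hu v hv huv => ⟨hv, lt_of_lt_of_le hu.2 (qf_monoOn μ hu.1 hv huv)⟩⟩

lemma isDown_D (x : ℝ) : IsDown {u | u ∈ Set.Ioo (0:ℝ) 1 ∧ qf μ u ≤ x} :=
  ⟨fun u hu => hu.1, fun u hu v hv huv => ⟨hv, le_trans (qf_monoOn μ hv hu.1 huv) hu.2⟩⟩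

lemma vol_U (x : ℝ) : volume {u | u ∈ Set.Ioo (0:ℝ) 1 ∧ x ≤ qf μ u} = μ (Set.Ici x) := by
  rw [← vol_qf_preimage μ _ measurableSet_Ici]
  congr 1; ext u; simp only [Set.mem_setOf_eq, Set.mem_inter_iff, Set.mem_preimage, Set.mem_Ici]
  tauto

lemma vol_V (x : ℝ) : volume {u | u ∈ Set.Ioo (0:ℝ) 1 ∧ x < qf μ u} = μ (Set.Ioi x) := by
  rw [← vol_qf_preimage μ _ measurableSet_Ioi]
  congr 1; ext u; simp only [Set.mem_setOf_eq, Set.mem_inter_iff, Set.mem_preimage, Set.mem_Ioi]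
  tauto

lemma vol_D (x : ℝ) : volume {u | u ∈ Set.Ioo (0:ℝ) 1 ∧ qf μ u ≤ x} = μ (Set.Iic x) := by
  rw [← vol_qf_preimage μ _ measurableSet_Iic]
  congr 1; ext u; simp only [Set.mem_setOf_eq, Set.mem_inter_iff, Set.mem_preimage, Set.mem_Iic]
  tauto

lemma pair_aemeasurable : AEMeasurable (fun u => (qf μ u, qf ν u))
    (volume.restrict (Set.Ioc (0:ℝ) 1)) :=
  (qf_aemeasurable μ).prodMk (qf_aemeasurable ν)

lemma star_apply (S : Set (ℝ × ℝ)) (hS : MeasurableSet S) :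
    Measure.map (fun u => (qf μ u, qf ν u)) (volume.restrict (Set.Ioc (0:ℝ) 1)) S =
      volume ((fun u => (qf μ u, qf ν u)) ⁻¹' S ∩ Set.Ioo 0 1) := by
  rw [Measure.map_apply_of_aemeasurable (pair_aemeasurable μ ν) hS,
    Measure.restrict_apply' measurableSet_Ioc, vol_inter_Ioc_Ioo]

lemma star_A (s t : ℝ) :
    Measure.map (fun u => (qf μ u, qf ν u)) (volume.restrict (Set.Ioc (0:ℝ) 1))
      {p : ℝ × ℝ | s ≤ p.1 ∧ t ≤ p.2} = min (μ (Set.Ici s)) (ν (Set.Ici t)) := by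
  rw [star_apply μ ν {p : ℝ × ℝ | s ≤ p.1 ∧ t ≤ p.2} (by exact (measurableSet_le measurable_const measurable_fst).inter (measurableSet_le measurable_const measurable_snd))]
  have hset : (fun u => (qf μ u, qf ν u)) ⁻¹' {p : ℝ × ℝ | s ≤ p.1 ∧ t ≤ p.2} ∩ Set.Ioo 0 1 =
      {u | u ∈ Set.Ioo (0:ℝ) 1 ∧ s ≤ qf μ u} ∩ {u | u ∈ Set.Ioo (0:ℝ) 1 ∧ t ≤ qf ν u} := by
    ext u
    simp only [Set.mem_inter_iff, Set.mem_preimage, Set.mem_setOf_eq]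
    tauto
  rw [hset, up_up_inter (isUp_U μ s) (isUp_U ν t), vol_U, vol_U]

lemma star_B (s t : ℝ) :
    Measure.map (fun u => (qf μ u, qf ν u)) (volume.restrict (Set.Ioc (0:ℝ) 1))
      {p : ℝ × ℝ | p.1 ≤ s ∧ p.2 ≤ t} = min (μ (Set.Iic s)) (ν (Set.Iic t)) := by
  rw [star_apply μ ν {p : ℝ × ℝ | p.1 ≤ s ∧ p.2 ≤ t} (by exact (measurableSet_le measurable_fst measurable_const).inter (measurableSet_le measurable_snd measurable_const))]
  have hset : (fun u => (qf μ u, qf ν u)) ⁻¹' {p : ℝ × ℝ | p.1 ≤ s ∧ p.2 ≤ t} ∩ Set.Ioo 0 1 =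
      {u | u ∈ Set.Ioo (0:ℝ) 1 ∧ qf μ u ≤ s} ∩ {u | u ∈ Set.Ioo (0:ℝ) 1 ∧ qf ν u ≤ t} := by
    ext u
    simp only [Set.mem_inter_iff, Set.mem_preimage, Set.mem_setOf_eq]
    tauto
  rw [hset, down_down_inter (isDown_D μ s) (isDown_D ν t), vol_D, vol_D]

lemma star_C (s t : ℝ) :
    Measure.map (fun u => (qf μ u, qf ν u)) (volume.restrict (Set.Ioc (0:ℝ) 1))
      {p : ℝ × ℝ | s ≤ p.1 ∧ p.2 ≤ t} = μ (Set.Ici s) - ν (Set.Ioi t) := by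
  rw [star_apply μ ν {p : ℝ × ℝ | s ≤ p.1 ∧ p.2 ≤ t} (by exact (measurableSet_le measurable_const measurable_fst).inter (measurableSet_le measurable_snd measurable_const))]
  have hset : (fun u => (qf μ u, qf ν u)) ⁻¹' {p : ℝ × ℝ | s ≤ p.1 ∧ p.2 ≤ t} ∩ Set.Ioo 0 1 =
      {u | u ∈ Set.Ioo (0:ℝ) 1 ∧ s ≤ qf μ u} \ {u | u ∈ Set.Ioo (0:ℝ) 1 ∧ t < qf ν u} := by
    ext u
    simp only [Set.mem_inter_iff, Set.mem_preimage, Set.mem_setOf_eq, Set.mem_diff, not_and,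
      not_lt]
    tauto
  rw [hset, up_diff_up (isUp_U μ s) (isUp_V ν t), vol_U, vol_V]

lemma star_D (s t : ℝ) :
    Measure.map (fun u => (qf μ u, qf ν u)) (volume.restrict (Set.Ioc (0:ℝ) 1))
      {p : ℝ × ℝ | p.1 ≤ s ∧ t ≤ p.2} = ν (Set.Ici t) - μ (Set.Ioi s) := by
  rw [star_apply μ ν {p : ℝ × ℝ | p.1 ≤ s ∧ t ≤ p.2} (by exact (measurableSet_le measurable_fst measurable_const).inter (measurableSet_le measurable_const measurable_snd))]
  have hset : (fun u => (qf μ u, qf ν u)) ⁻¹' {p : ℝ × ℝ | p.1 ≤ s ∧ t ≤ p.2} ∩ Set.Ioo 0 1 =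
      {u | u ∈ Set.Ioo (0:ℝ) 1 ∧ t ≤ qf ν u} \ {u | u ∈ Set.Ioo (0:ℝ) 1 ∧ s < qf μ u} := by
    ext u
    simp only [Set.mem_inter_iff, Set.mem_preimage, Set.mem_setOf_eq, Set.mem_diff, not_and,
      not_lt]
    tauto
  rw [hset, up_diff_up (isUp_U ν t) (isUp_V μ s), vol_U, vol_V]

variable {μ ν} in
lemma coup_A {π : Measure (ℝ × ℝ)} (h1 : π.fst = μ) (h2 : π.snd = ν) (s t : ℝ) :
    π {p : ℝ × ℝ | s ≤ p.1 ∧ t ≤ p.2} ≤ min (μ (Set.Ici s)) (ν (Set.Ici t)) := by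
  refine le_min ?_ ?_
  · rw [← h1, Measure.fst_apply measurableSet_Ici]
    exact measure_mono (fun p hp => hp.1)
  · rw [← h2, Measure.snd_apply measurableSet_Ici]
    exact measure_mono (fun p hp => hp.2)

variable {μ ν} in
lemma coup_B {π : Measure (ℝ × ℝ)} (h1 : π.fst = μ) (h2 : π.snd = ν) (s t : ℝ) :
    π {p : ℝ × ℝ | p.1 ≤ s ∧ p.2 ≤ t} ≤ min (μ (Set.Iic s)) (ν (Set.Iic t)) := by
  refine le_min ?_ ?_
  · rw [← h1, Measure.fst_apply measurableSet_Iic]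
    exact measure_mono (fun p hp => hp.1)
  · rw [← h2, Measure.snd_apply measurableSet_Iic]
    exact measure_mono (fun p hp => hp.2)

variable {μ ν} in
lemma coup_C {π : Measure (ℝ × ℝ)} (h1 : π.fst = μ) (h2 : π.snd = ν) (s t : ℝ) :
    μ (Set.Ici s) - ν (Set.Ioi t) ≤ π {p : ℝ × ℝ | s ≤ p.1 ∧ p.2 ≤ t} := by
  rw [tsub_le_iff_right, ← h1, ← h2, Measure.fst_apply measurableSet_Ici,
    Measure.snd_apply measurableSet_Ioi]
  calc π (Prod.fst ⁻¹' Set.Ici s)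
      ≤ π ({p : ℝ × ℝ | s ≤ p.1 ∧ p.2 ≤ t} ∪ Prod.snd ⁻¹' Set.Ioi t) := by
        refine measure_mono ?_
        intro p hp
        rcases le_or_gt p.2 t with h | h
        · exact Or.inl ⟨hp, h⟩
        · exact Or.inr h
    _ ≤ π {p : ℝ × ℝ | s ≤ p.1 ∧ p.2 ≤ t} + π (Prod.snd ⁻¹' Set.Ioi t) := measure_union_le _ _

variable {μ ν} in
lemma coup_D {π : Measure (ℝ × ℝ)} (h1 : π.fst = μ) (h2 : π.snd = ν) (s t : ℝ) :
    ν (Set.Ici t) - μ (Set.Ioi s) ≤ π {p : ℝ × ℝ | p.1 ≤ s ∧ t ≤ p.2} := by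
  rw [tsub_le_iff_right, ← h1, ← h2, Measure.snd_apply measurableSet_Ici,
    Measure.fst_apply measurableSet_Ioi]
  calc π (Prod.snd ⁻¹' Set.Ici t)
      ≤ π ({p : ℝ × ℝ | p.1 ≤ s ∧ t ≤ p.2} ∪ Prod.fst ⁻¹' Set.Ioi s) := by
        refine measure_mono ?_
        intro p hp
        rcases le_or_gt p.1 s with h | h
        · exact Or.inl ⟨h, hp⟩
        · exact Or.inr h
    _ ≤ π {p : ℝ × ℝ | p.1 ≤ s ∧ t ≤ p.2} + π (Prod.fst ⁻¹' Set.Ioi s) := measure_union_le _ _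

end Main

noncomputable def LL (ρ : Measure (ℝ × ℝ)) (f g : ℝ × ℝ → ℝ) : ENNReal :=
  ∫⁻ p, ENNReal.ofReal (f p) * ENNReal.ofReal (g p) ∂ρ

lemma bound_abs (a b : ℝ) : max a 0 * max b 0 ≤ |a * b| := by
  rw [abs_mul]
  exact mul_le_mul (max_le (le_abs_self a) (abs_nonneg a))
    (max_le (le_abs_self b) (abs_nonneg b)) (le_max_right b 0) (abs_nonneg a)

lemma prod_decomp (a b : ℝ) :
    a * b = max a 0 * max b 0 + max (-a) 0 * max (-b) 0
      - max a 0 * max (-b) 0 - max (-a) 0 * max b 0 := by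
  set A1 := max a 0 with hA1
  set A2 := max (-a) 0 with hA2
  set B1 := max b 0 with hB1
  set B2 := max (-b) 0 with hB2
  have ha : A1 - A2 = a := max_zero_sub_eq_self a
  have hb : B1 - B2 = b := max_zero_sub_eq_self b
  rw [← ha, ← hb]; ring

lemma LL_fin {ρ : Measure (ℝ × ℝ)} (hi : Integrable (fun p : ℝ × ℝ => p.1 * p.2) ρ)
    {f g : ℝ × ℝ → ℝ} (hb : ∀ p : ℝ × ℝ, f p * g p ≤ |p.1 * p.2|)
    (hf0 : ∀ p, 0 ≤ f p) : LL ρ f g ≠ ⊤ := by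
  have hle : ∀ p : ℝ × ℝ, ENNReal.ofReal (f p) * ENNReal.ofReal (g p) ≤
      (‖p.1 * p.2‖₊ : ENNReal) := fun p => by
    rw [← ENNReal.ofReal_mul (hf0 p), ← ENNReal.ofReal_coe_nnreal, coe_nnnorm, Real.norm_eq_abs]
    exact ENNReal.ofReal_le_ofReal (hb p)
  exact ((lintegral_mono hle).trans_lt hi.2).ne

lemma LL_toReal {ρ : Measure (ℝ × ℝ)} {f g : ℝ × ℝ → ℝ}
    (hf : Continuous f) (hg : Continuous g) (hf0 : ∀ p, 0 ≤ f p) (hg0 : ∀ p, 0 ≤ g p) :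
    (LL ρ f g).toReal = ∫ p, f p * g p ∂ρ := by
  rw [integral_eq_lintegral_of_nonneg_ae (ae_of_all _ fun p => mul_nonneg (hf0 p) (hg0 p))
    (hf.mul hg).aestronglyMeasurable]
  congr 1
  refine lintegral_congr fun p => ?_
  rw [ENNReal.ofReal_mul (hf0 p)]

lemma decomp (ρ : Measure (ℝ × ℝ)) (hi : Integrable (fun p : ℝ × ℝ => p.1 * p.2) ρ) :
    ∫ p, p.1 * p.2 ∂ρ =
      (LL ρ (fun p => max p.1 0) (fun p => max p.2 0)).toReal
      + (LL ρ (fun p => max (-p.1) 0) (fun p => max (-p.2) 0)).toReal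
      - (LL ρ (fun p => max p.1 0) (fun p => max (-p.2) 0)).toReal
      - (LL ρ (fun p => max (-p.1) 0) (fun p => max p.2 0)).toReal := by
  have c1 : Continuous fun p : ℝ × ℝ => max p.1 0 := continuous_fst.max continuous_const
  have c2 : Continuous fun p : ℝ × ℝ => max p.2 0 := continuous_snd.max continuous_const
  have c1' : Continuous fun p : ℝ × ℝ => max (-p.1) 0 := continuous_fst.neg.max continuous_const
  have c2' : Continuous fun p : ℝ × ℝ => max (-p.2) 0 := continuous_snd.neg.max continuous_const
  have hmk : ∀ (f g : ℝ × ℝ → ℝ), Continuous f → Continuous g → (∀ p, 0 ≤ f p) →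
      (∀ p, 0 ≤ g p) → (∀ p : ℝ × ℝ, f p * g p ≤ |p.1 * p.2|) →
      Integrable (fun p => f p * g p) ρ := by
    intro f g hf hg hf0 hg0 hb
    refine Integrable.mono' hi.abs (hf.mul hg).aestronglyMeasurable (ae_of_all _ fun p => ?_)
    rw [Real.norm_eq_abs, abs_of_nonneg (mul_nonneg (hf0 p) (hg0 p))]
    exact hb p
  have i1 : Integrable (fun p : ℝ × ℝ => max p.1 0 * max p.2 0) ρ :=
    hmk _ _ c1 c2 (fun p => le_max_right _ _) (fun p => le_max_right _ _)
      (fun p => bound_abs p.1 p.2)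
  have i2 : Integrable (fun p : ℝ × ℝ => max (-p.1) 0 * max (-p.2) 0) ρ :=
    hmk _ _ c1' c2' (fun p => le_max_right _ _) (fun p => le_max_right _ _)
      (fun p => by rw [← neg_mul_neg p.1 p.2] ; exact bound_abs (-p.1) (-p.2))
  have i3 : Integrable (fun p : ℝ × ℝ => max p.1 0 * max (-p.2) 0) ρ :=
    hmk _ _ c1 c2' (fun p => le_max_right _ _) (fun p => le_max_right _ _)
      (fun p => by
        have := bound_abs p.1 (-p.2)
        rwa [mul_neg, abs_neg] at this)
  have i4 : Integrable (fun p : ℝ × ℝ => max (-p.1) 0 * max p.2 0) ρ :=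
    hmk _ _ c1' c2 (fun p => le_max_right _ _) (fun p => le_max_right _ _)
      (fun p => by
        have := bound_abs (-p.1) p.2
        rwa [neg_mul, abs_neg] at this)
  have hfun : (fun p : ℝ × ℝ => p.1 * p.2) = fun p : ℝ × ℝ =>
      max p.1 0 * max p.2 0 + max (-p.1) 0 * max (-p.2) 0
        - max p.1 0 * max (-p.2) 0 - max (-p.1) 0 * max p.2 0 :=
    funext fun p => prod_decomp p.1 p.2
  have i12 : Integrable (fun p : ℝ × ℝ =>
      max p.1 0 * max p.2 0 + max (-p.1) 0 * max (-p.2) 0) ρ := i1.add i2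
  have i123 : Integrable (fun p : ℝ × ℝ =>
      max p.1 0 * max p.2 0 + max (-p.1) 0 * max (-p.2) 0
        - max p.1 0 * max (-p.2) 0) ρ := i12.sub i3
  rw [hfun, integral_sub i123 i4, integral_sub i12 i3,
    integral_add i1 i2,
    LL_toReal c1 c2 (fun p => le_max_right _ _) (fun p => le_max_right _ _),
    LL_toReal c1' c2' (fun p => le_max_right _ _) (fun p => le_max_right _ _),
    LL_toReal c1 c2' (fun p => le_max_right _ _) (fun p => le_max_right _ _),
    LL_toReal c1' c2 (fun p => le_max_right _ _) (fun p => le_max_right _ _)]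

set_option maxHeartbeats 1000000 in
theorem stmt_1 (μ ν : Measure ℝ) [IsProbabilityMeasure μ] [IsProbabilityMeasure ν]
    (hμ2 : Integrable (fun x => x ^ 2) μ) (hν2 : Integrable (fun y => y ^ 2) ν) :
    (∀ π : Measure (ℝ × ℝ), π.fst = μ → π.snd = ν →
      Integrable (fun p => p.1 * p.2) π →
      ∫ p, p.1 * p.2 ∂π ≤ ∫ t in Set.Ioc (0:ℝ) 1, qf μ t * qf ν t) ∧
    ∃ π : Measure (ℝ × ℝ),
      π = Measure.map (fun t => (qf μ t, qf ν t)) (volume.restrict (Set.Ioc (0:ℝ) 1)) ∧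
      π.fst = μ ∧ π.snd = ν ∧
      ∫ p, p.1 * p.2 ∂π = ∫ t in Set.Ioc (0:ℝ) 1, qf μ t * qf ν t := by
  haveI hm : IsProbabilityMeasure (volume.restrict (Set.Ioc (0:ℝ) 1)) :=
    ⟨by simp [Real.volume_Ioc]⟩
  have hpm : AEMeasurable (fun u => (qf μ u, qf ν u)) (volume.restrict (Set.Ioc (0:ℝ) 1)) :=
    pair_aemeasurable μ ν
  haveI : IsProbabilityMeasure
      (Measure.map (fun u => (qf μ u, qf ν u)) (volume.restrict (Set.Ioc (0:ℝ) 1))) :=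
    Measure.isProbabilityMeasure_map hpm
  have hfst : (Measure.map (fun u => (qf μ u, qf ν u)) (volume.restrict (Set.Ioc (0:ℝ) 1))).fst = μ := by
    rw [Measure.fst, AEMeasurable.map_map_of_aemeasurable
      measurable_fst.aemeasurable hpm]
    exact map_qf μ
  have hsnd : (Measure.map (fun u => (qf μ u, qf ν u)) (volume.restrict (Set.Ioc (0:ℝ) 1))).snd = ν := by
    rw [Measure.snd, AEMeasurable.map_map_of_aemeasurable
      measurable_snd.aemeasurable hpm]
    exact map_qf ν
  have hq2μ : Integrable (fun u => qf μ u ^ 2) (volume.restrict (Set.Ioc (0:ℝ) 1)) := by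
    have h1 : Integrable (fun x : ℝ => x ^ 2)
        (Measure.map (qf μ) (volume.restrict (Set.Ioc (0:ℝ) 1))) := by
      rw [map_qf μ]; exact hμ2
    exact (integrable_map_measure (f := qf μ) (g := fun x : ℝ => x ^ 2)
      (μ := volume.restrict (Set.Ioc (0:ℝ) 1)) h1.aestronglyMeasurable
      (qf_aemeasurable μ)).mp h1
  have hq2ν : Integrable (fun u => qf ν u ^ 2) (volume.restrict (Set.Ioc (0:ℝ) 1)) := by
    have h1 : Integrable (fun x : ℝ => x ^ 2)
        (Measure.map (qf ν) (volume.restrict (Set.Ioc (0:ℝ) 1))) := by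
      rw [map_qf ν]; exact hν2
    exact (integrable_map_measure (f := qf ν) (g := fun x : ℝ => x ^ 2)
      (μ := volume.restrict (Set.Ioc (0:ℝ) 1)) h1.aestronglyMeasurable
      (qf_aemeasurable ν)).mp h1
  have habs : ∀ a b : ℝ, |a * b| ≤ (a ^ 2 + b ^ 2) / 2 := by
    intro a b
    rw [abs_mul]
    nlinarith [sq_nonneg (|a| - |b|), sq_abs a, sq_abs b, abs_nonneg a, abs_nonneg b]
  have hqint : Integrable (fun u => qf μ u * qf ν u) (volume.restrict (Set.Ioc (0:ℝ) 1)) := by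
    refine Integrable.mono' ((hq2μ.add hq2ν).div_const 2)
      ((qf_aemeasurable μ).mul (qf_aemeasurable ν)).aestronglyMeasurable
      (ae_of_all _ fun u => ?_)
    rw [Real.norm_eq_abs]
    exact habs _ _
  have hcontmul : Continuous fun p : ℝ × ℝ => p.1 * p.2 := continuous_fst.mul continuous_snd
  have hπ'int : Integrable (fun p : ℝ × ℝ => p.1 * p.2) (Measure.map (fun u => (qf μ u, qf ν u)) (volume.restrict (Set.Ioc (0:ℝ) 1))) := by
    exact (integrable_map_measure (f := fun u => (qf μ u, qf ν u))
      (g := fun p : ℝ × ℝ => p.1 * p.2) (μ := volume.restrict (Set.Ioc (0:ℝ) 1))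
      hcontmul.aestronglyMeasurable hpm).mpr hqint
  have hval : ∫ p, p.1 * p.2 ∂(Measure.map (fun u => (qf μ u, qf ν u)) (volume.restrict (Set.Ioc (0:ℝ) 1))) = ∫ t in Set.Ioc (0:ℝ) 1, qf μ t * qf ν t := by
    rw [integral_map hpm hcontmul.aestronglyMeasurable]
  have c1 : Continuous fun p : ℝ × ℝ => max p.1 0 := continuous_fst.max continuous_const
  have c2 : Continuous fun p : ℝ × ℝ => max p.2 0 := continuous_snd.max continuous_const
  have c1' : Continuous fun p : ℝ × ℝ => max (-p.1) 0 := continuous_fst.neg.max continuous_const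
  have c2' : Continuous fun p : ℝ × ℝ => max (-p.2) 0 := continuous_snd.neg.max continuous_const
  have mA : ∀ (q p : ℝ × ℝ), (0 < q.1 ∧ q.1 ≤ max p.1 0) ↔ (0 < q.1 ∧ q.1 ≤ p.1) := by
    intro q p
    constructor
    · rintro ⟨h0, h1⟩
      exact ⟨h0, (le_max_iff.mp h1).resolve_right (not_le.mpr h0)⟩
    · rintro ⟨h0, h1⟩
      exact ⟨h0, le_max_of_le_left h1⟩
  have mB : ∀ (q p : ℝ × ℝ), (0 < q.1 ∧ q.1 ≤ max (-p.1) 0) ↔ (0 < q.1 ∧ p.1 ≤ -q.1) := by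
    intro q p
    constructor
    · rintro ⟨h0, h1⟩
      exact ⟨h0, le_neg.mp ((le_max_iff.mp h1).resolve_right (not_le.mpr h0))⟩
    · rintro ⟨h0, h1⟩
      exact ⟨h0, le_max_of_le_left (le_neg.mpr h1)⟩
  have mA2 : ∀ (q p : ℝ × ℝ), (0 < q.2 ∧ q.2 ≤ max p.2 0) ↔ (0 < q.2 ∧ q.2 ≤ p.2) := by
    intro q p
    constructor
    · rintro ⟨h0, h1⟩
      exact ⟨h0, (le_max_iff.mp h1).resolve_right (not_le.mpr h0)⟩
    · rintro ⟨h0, h1⟩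
      exact ⟨h0, le_max_of_le_left h1⟩
  have mB2 : ∀ (q p : ℝ × ℝ), (0 < q.2 ∧ q.2 ≤ max (-p.2) 0) ↔ (0 < q.2 ∧ p.2 ≤ -q.2) := by
    intro q p
    constructor
    · rintro ⟨h0, h1⟩
      exact ⟨h0, le_neg.mp ((le_max_iff.mp h1).resolve_right (not_le.mpr h0))⟩
    · rintro ⟨h0, h1⟩
      exact ⟨h0, le_max_of_le_left (le_neg.mpr h1)⟩
  -- main pointwise inequality
  have main_ineq : ∀ π : Measure (ℝ × ℝ), π.fst = μ → π.snd = ν →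
      Integrable (fun p : ℝ × ℝ => p.1 * p.2) π →
      ∫ p, p.1 * p.2 ∂π ≤ ∫ p, p.1 * p.2 ∂(Measure.map (fun u => (qf μ u, qf ν u)) (volume.restrict (Set.Ioc (0:ℝ) 1))) := by
    intro π h1 h2 hint
    haveI : IsProbabilityMeasure π := by
      constructor
      have : π Set.univ = π.fst Set.univ := by
        rw [Measure.fst_apply MeasurableSet.univ, Set.preimage_univ]
      rw [this, h1, measure_univ]
    have compA : LL π (fun p => max p.1 0) (fun p => max p.2 0) ≤
        LL (Measure.map (fun u => (qf μ u, qf ν u)) (volume.restrict (Set.Ioc (0:ℝ) 1))) (fun p => max p.1 0) (fun p => max p.2 0) := by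
      unfold LL
      rw [layercake2 π _ _ c1 c2, layercake2 (Measure.map (fun u => (qf μ u, qf ν u)) (volume.restrict (Set.Ioc (0:ℝ) 1))) _ _ c1 c2]
      refine lintegral_mono fun q => ?_
      by_cases hq1 : 0 < q.1
      · by_cases hq2 : 0 < q.2
        · have hset : {p : ℝ × ℝ | 0 < q.1 ∧ q.1 ≤ max p.1 0 ∧ 0 < q.2 ∧ q.2 ≤ max p.2 0} =
              {p : ℝ × ℝ | q.1 ≤ p.1 ∧ q.2 ≤ p.2} := by
            ext p
            simp only [Set.mem_setOf_eq]
            constructor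
            · rintro ⟨a0, a1, b0, b1⟩
              exact ⟨((mA q p).mp ⟨a0, a1⟩).2, ((mA2 q p).mp ⟨b0, b1⟩).2⟩
            · rintro ⟨ha, hb⟩
              exact ⟨hq1, ((mA q p).mpr ⟨hq1, ha⟩).2, hq2, ((mA2 q p).mpr ⟨hq2, hb⟩).2⟩
          rw [hset]
          exact (coup_A h1 h2 q.1 q.2).trans (le_of_eq (star_A μ ν q.1 q.2).symm)
        · have hset : {p : ℝ × ℝ | 0 < q.1 ∧ q.1 ≤ max p.1 0 ∧ 0 < q.2 ∧ q.2 ≤ max p.2 0} =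
              (∅ : Set (ℝ × ℝ)) := by
            ext p; simp only [Set.mem_setOf_eq, Set.mem_empty_iff_false, iff_false]
            rintro ⟨-, -, h, -⟩; exact hq2 h
          rw [hset]
          simp
      · have hset : {p : ℝ × ℝ | 0 < q.1 ∧ q.1 ≤ max p.1 0 ∧ 0 < q.2 ∧ q.2 ≤ max p.2 0} =
            (∅ : Set (ℝ × ℝ)) := by
          ext p; simp only [Set.mem_setOf_eq, Set.mem_empty_iff_false, iff_false]
          rintro ⟨h, -⟩; exact hq1 h
        rw [hset]
        simp
    have compB : LL π (fun p => max (-p.1) 0) (fun p => max (-p.2) 0) ≤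
        LL (Measure.map (fun u => (qf μ u, qf ν u)) (volume.restrict (Set.Ioc (0:ℝ) 1))) (fun p => max (-p.1) 0) (fun p => max (-p.2) 0) := by
      unfold LL
      rw [layercake2 π _ _ c1' c2', layercake2 (Measure.map (fun u => (qf μ u, qf ν u)) (volume.restrict (Set.Ioc (0:ℝ) 1))) _ _ c1' c2']
      refine lintegral_mono fun q => ?_
      by_cases hq1 : 0 < q.1
      · by_cases hq2 : 0 < q.2
        · have hset : {p : ℝ × ℝ | 0 < q.1 ∧ q.1 ≤ max (-p.1) 0 ∧ 0 < q.2 ∧ q.2 ≤ max (-p.2) 0} =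
              {p : ℝ × ℝ | p.1 ≤ -q.1 ∧ p.2 ≤ -q.2} := by
            ext p
            simp only [Set.mem_setOf_eq]
            constructor
            · rintro ⟨a0, a1, b0, b1⟩
              exact ⟨((mB q p).mp ⟨a0, a1⟩).2, ((mB2 q p).mp ⟨b0, b1⟩).2⟩
            · rintro ⟨ha, hb⟩
              exact ⟨hq1, ((mB q p).mpr ⟨hq1, ha⟩).2, hq2, ((mB2 q p).mpr ⟨hq2, hb⟩).2⟩
          rw [hset]
          exact (coup_B h1 h2 (-q.1) (-q.2)).trans (le_of_eq (star_B μ ν (-q.1) (-q.2)).symm)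
        · have hset : {p : ℝ × ℝ | 0 < q.1 ∧ q.1 ≤ max (-p.1) 0 ∧ 0 < q.2 ∧ q.2 ≤ max (-p.2) 0} =
              (∅ : Set (ℝ × ℝ)) := by
            ext p; simp only [Set.mem_setOf_eq, Set.mem_empty_iff_false, iff_false]
            rintro ⟨-, -, h, -⟩; exact hq2 h
          rw [hset]
          simp
      · have hset : {p : ℝ × ℝ | 0 < q.1 ∧ q.1 ≤ max (-p.1) 0 ∧ 0 < q.2 ∧ q.2 ≤ max (-p.2) 0} =
            (∅ : Set (ℝ × ℝ)) := by
          ext p; simp only [Set.mem_setOf_eq, Set.mem_empty_iff_false, iff_false]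
          rintro ⟨h, -⟩; exact hq1 h
        rw [hset]
        simp
    have compC : LL (Measure.map (fun u => (qf μ u, qf ν u)) (volume.restrict (Set.Ioc (0:ℝ) 1))) (fun p => max p.1 0) (fun p => max (-p.2) 0) ≤
        LL π (fun p => max p.1 0) (fun p => max (-p.2) 0) := by
      unfold LL
      rw [layercake2 π _ _ c1 c2', layercake2 (Measure.map (fun u => (qf μ u, qf ν u)) (volume.restrict (Set.Ioc (0:ℝ) 1))) _ _ c1 c2']
      refine lintegral_mono fun q => ?_
      by_cases hq1 : 0 < q.1
      · by_cases hq2 : 0 < q.2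
        · have hset : {p : ℝ × ℝ | 0 < q.1 ∧ q.1 ≤ max p.1 0 ∧ 0 < q.2 ∧ q.2 ≤ max (-p.2) 0} =
              {p : ℝ × ℝ | q.1 ≤ p.1 ∧ p.2 ≤ -q.2} := by
            ext p
            simp only [Set.mem_setOf_eq]
            constructor
            · rintro ⟨a0, a1, b0, b1⟩
              exact ⟨((mA q p).mp ⟨a0, a1⟩).2, ((mB2 q p).mp ⟨b0, b1⟩).2⟩
            · rintro ⟨ha, hb⟩
              exact ⟨hq1, ((mA q p).mpr ⟨hq1, ha⟩).2, hq2, ((mB2 q p).mpr ⟨hq2, hb⟩).2⟩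
          rw [hset]
          exact (le_of_eq (star_C μ ν q.1 (-q.2))).trans (coup_C h1 h2 q.1 (-q.2))
        · have hset : {p : ℝ × ℝ | 0 < q.1 ∧ q.1 ≤ max p.1 0 ∧ 0 < q.2 ∧ q.2 ≤ max (-p.2) 0} =
              (∅ : Set (ℝ × ℝ)) := by
            ext p; simp only [Set.mem_setOf_eq, Set.mem_empty_iff_false, iff_false]
            rintro ⟨-, -, h, -⟩; exact hq2 h
          rw [hset]
          simp
      · have hset : {p : ℝ × ℝ | 0 < q.1 ∧ q.1 ≤ max p.1 0 ∧ 0 < q.2 ∧ q.2 ≤ max (-p.2) 0} =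
            (∅ : Set (ℝ × ℝ)) := by
          ext p; simp only [Set.mem_setOf_eq, Set.mem_empty_iff_false, iff_false]
          rintro ⟨h, -⟩; exact hq1 h
        rw [hset]
        simp
    have compD : LL (Measure.map (fun u => (qf μ u, qf ν u)) (volume.restrict (Set.Ioc (0:ℝ) 1))) (fun p => max (-p.1) 0) (fun p => max p.2 0) ≤
        LL π (fun p => max (-p.1) 0) (fun p => max p.2 0) := by
      unfold LL
      rw [layercake2 π _ _ c1' c2, layercake2 (Measure.map (fun u => (qf μ u, qf ν u)) (volume.restrict (Set.Ioc (0:ℝ) 1))) _ _ c1' c2]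
      refine lintegral_mono fun q => ?_
      by_cases hq1 : 0 < q.1
      · by_cases hq2 : 0 < q.2
        · have hset : {p : ℝ × ℝ | 0 < q.1 ∧ q.1 ≤ max (-p.1) 0 ∧ 0 < q.2 ∧ q.2 ≤ max p.2 0} =
              {p : ℝ × ℝ | p.1 ≤ -q.1 ∧ q.2 ≤ p.2} := by
            ext p
            simp only [Set.mem_setOf_eq]
            constructor
            · rintro ⟨a0, a1, b0, b1⟩
              exact ⟨((mB q p).mp ⟨a0, a1⟩).2, ((mA2 q p).mp ⟨b0, b1⟩).2⟩
            · rintro ⟨ha, hb⟩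
              exact ⟨hq1, ((mB q p).mpr ⟨hq1, ha⟩).2, hq2, ((mA2 q p).mpr ⟨hq2, hb⟩).2⟩
          rw [hset]
          exact (le_of_eq (star_D μ ν (-q.1) q.2)).trans (coup_D h1 h2 (-q.1) q.2)
        · have hset : {p : ℝ × ℝ | 0 < q.1 ∧ q.1 ≤ max (-p.1) 0 ∧ 0 < q.2 ∧ q.2 ≤ max p.2 0} =
              (∅ : Set (ℝ × ℝ)) := by
            ext p; simp only [Set.mem_setOf_eq, Set.mem_empty_iff_false, iff_false]
            rintro ⟨-, -, h, -⟩; exact hq2 h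
          rw [hset]
          simp
      · have hset : {p : ℝ × ℝ | 0 < q.1 ∧ q.1 ≤ max (-p.1) 0 ∧ 0 < q.2 ∧ q.2 ≤ max p.2 0} =
            (∅ : Set (ℝ × ℝ)) := by
          ext p; simp only [Set.mem_setOf_eq, Set.mem_empty_iff_false, iff_false]
          rintro ⟨h, -⟩; exact hq1 h
        rw [hset]
        simp
    -- finiteness
    have bA : ∀ p : ℝ × ℝ, max p.1 0 * max p.2 0 ≤ |p.1 * p.2| := fun p => bound_abs p.1 p.2
    have bB : ∀ p : ℝ × ℝ, max (-p.1) 0 * max (-p.2) 0 ≤ |p.1 * p.2| := fun p => by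
      rw [← neg_mul_neg p.1 p.2]; exact bound_abs (-p.1) (-p.2)
    have bC : ∀ p : ℝ × ℝ, max p.1 0 * max (-p.2) 0 ≤ |p.1 * p.2| := fun p => by
      have := bound_abs p.1 (-p.2); rwa [mul_neg, abs_neg] at this
    have bD : ∀ p : ℝ × ℝ, max (-p.1) 0 * max p.2 0 ≤ |p.1 * p.2| := fun p => by
      have := bound_abs (-p.1) p.2; rwa [neg_mul, abs_neg] at this
    have nn : ∀ (a : ℝ), (0:ℝ) ≤ max a 0 := fun a => le_max_right a 0
    have finA' := LL_fin hπ'int bA (fun p => nn _)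
    have finB' := LL_fin hπ'int bB (fun p => nn _)
    have finC := LL_fin hint bC (fun p => nn _)
    have finD := LL_fin hint bD (fun p => nn _)
    rw [decomp π hint, decomp (Measure.map (fun u => (qf μ u, qf ν u)) (volume.restrict (Set.Ioc (0:ℝ) 1))) hπ'int]
    have tA := ENNReal.toReal_mono finA' compA
    have tB := ENNReal.toReal_mono finB' compB
    have tC := ENNReal.toReal_mono finC compC
    have tD := ENNReal.toReal_mono finD compD
    linarith
  refine ⟨fun π h1 h2 hint => (main_ineq π h1 h2 hint).trans (le_of_eq hval),
    _, rfl, hfst, hsnd, hval⟩
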